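/- For each fixed θ ∈ (0,π], the function β ↦ γ_θ(β) (the unique γ ≥ 0 with cosh(γ) = coth(2β)cosh(2β) − cos θ) is twice differentiable at β_c = ln(1+√2)/2, its first derivative at β_c equals 0, and its second derivative at β_c equals 16/√(3 − 4cos θ + cos²θ). -/

import Mathlib

/-- The hyperbolic cotangent. -/
noncomputable def coth (x : ℝ) : ℝ := Real.cosh x / Real.sinh x

/-- The critical inverse temperature of the two-dimensional Ising model. -/
noncomputable def betac : ℝ := Real.log (1 + Real.sqrt 2) / 2

namespace Stmt12Aux

open Real

noncomputable def F (c β : ℝ) : ℝ := Real.cosh (2*β)^2 / Real.sinh (2*β) - c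

noncomputable def F1 (β : ℝ) : ℝ :=
  (4 * Real.cosh (2*β) * Real.sinh (2*β)^2 - 2 * Real.cosh (2*β)^3) / Real.sinh (2*β)^2

noncomputable def G (c β : ℝ) : ℝ := Real.arsinh (Real.sqrt ((F c β)^2 - 1))

noncomputable def G1 (c β : ℝ) : ℝ := F1 β / Real.sqrt ((F c β)^2 - 1)

lemma sqrt2_sq : Real.sqrt 2 ^ 2 = 2 := Real.sq_sqrt (by norm_num)

lemma inv_one_add_sqrt2 : (1 + Real.sqrt 2)⁻¹ = Real.sqrt 2 - 1 := by
  have h : (1 + Real.sqrt 2) * (Real.sqrt 2 - 1) = 1 := by linear_combination sqrt2_sq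
  exact inv_eq_of_mul_eq_one_right h

lemma two_betac : 2 * betac = Real.log (1 + Real.sqrt 2) := by unfold betac; ring

lemma sinh_two_betac : Real.sinh (2 * betac) = 1 := by
  rw [two_betac, Real.sinh_log (by positivity), inv_one_add_sqrt2]; ring

lemma cosh_two_betac : Real.cosh (2 * betac) = Real.sqrt 2 := by
  rw [two_betac, Real.cosh_log (by positivity), inv_one_add_sqrt2]; ring

lemma hd2 (β : ℝ) : HasDerivAt (fun β : ℝ => 2*β) 2 β := by
  simpa using (hasDerivAt_id β).const_mul 2

lemma hk (β : ℝ) : HasDerivAt (fun β => Real.cosh (2*β)) (2 * Real.sinh (2*β)) β := by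
  simpa [Function.comp_def, mul_comm] using (Real.hasDerivAt_cosh (2*β)).comp β (hd2 β)

lemma hs (β : ℝ) : HasDerivAt (fun β => Real.sinh (2*β)) (2 * Real.cosh (2*β)) β := by
  simpa [Function.comp_def, mul_comm] using (Real.hasDerivAt_sinh (2*β)).comp β (hd2 β)

lemma hasDerivAt_F (c : ℝ) {β : ℝ} (h : Real.sinh (2*β) ≠ 0) :
    HasDerivAt (F c) (F1 β) β := by
  have H := (((hk β).pow 2).div (hs β) h).sub_const c
  convert H using 1
  · rfl
  · rfl
  · rfl
  unfold F1
  simp only [Pi.pow_apply]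
  field_simp
  ring

lemma hasDerivAt_G (c : ℝ) {β : ℝ} (h : Real.sinh (2*β) ≠ 0) (hF : 1 < F c β) :
    HasDerivAt (G c) (G1 c β) β := by
  have hA : 0 < (F c β)^2 - 1 := by nlinarith
  have hinner : HasDerivAt (fun β => (F c β)^2 - 1) (2 * F c β ^ 1 * F1 β) β :=
    ((hasDerivAt_F c h).pow 2).sub_const 1
  have hsq := (Real.hasDerivAt_sqrt (ne_of_gt hA)).comp β hinner
  have harsinh := (Real.hasDerivAt_arsinh (Real.sqrt ((F c β)^2 - 1))).comp β hsq
  convert harsinh using 1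
  · rfl
  · rfl
  · rfl
  have h1 : Real.sqrt ((F c β)^2 - 1) ^ 2 = (F c β)^2 - 1 := Real.sq_sqrt hA.le
  have h2 : Real.sqrt (1 + ((F c β)^2 - 1)) = F c β := by
    rw [show 1 + ((F c β)^2 - 1) = (F c β)^2 by ring, Real.sqrt_sq (by linarith)]
  unfold G1
  rw [h1, h2]
  have hs0 : Real.sqrt ((F c β)^2 - 1) ≠ 0 := by positivity
  have hF0 : F c β ≠ 0 := by linarith
  field_simp

lemma hasDerivAt_F1 : HasDerivAt F1 16 betac := by
  have h1 : Real.sinh (2*betac) ≠ 0 := by rw [sinh_two_betac]; norm_num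
  have hnum := (((hk betac).const_mul 4).mul ((hs betac).pow 2)).sub
    (((hk betac).pow 3).const_mul 2)
  have hden := (hs betac).pow 2
  have H := hnum.div hden (pow_ne_zero 2 h1)
  convert H using 1
  · rfl
  · rfl
  · rfl
  simp only [Pi.pow_apply, Pi.mul_apply, Pi.sub_apply]
  rw [sinh_two_betac, cosh_two_betac]
  push_cast
  ring_nf
  have h4 : Real.sqrt 2 ^ 4 = 4 := by
    rw [show (4:ℕ) = 2*2 from rfl, pow_mul, sqrt2_sq]; norm_num
  linarith [sqrt2_sq, h4]

lemma F_betac (c : ℝ) : F c betac = 2 - c := by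
  unfold F
  rw [sinh_two_betac, cosh_two_betac, sqrt2_sq]
  norm_num

lemma F1_betac : F1 betac = 0 := by
  unfold F1
  rw [sinh_two_betac, cosh_two_betac]
  have h3 : Real.sqrt 2 ^ 3 = 2 * Real.sqrt 2 := by
    rw [pow_succ, sqrt2_sq]
  rw [h3]
  ring

lemma hasDerivAt_G1 (c : ℝ) (hc : c < 1) :
    HasDerivAt (G1 c) (16 / Real.sqrt (3 - 4*c + c^2)) betac := by
  have h1 : Real.sinh (2*betac) ≠ 0 := by rw [sinh_two_betac]; norm_num
  have hFb : F c betac = 2 - c := F_betac c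
  have hF : 1 < F c betac := by rw [hFb]; linarith
  have hA : 0 < (F c betac)^2 - 1 := by nlinarith
  have hinner : HasDerivAt (fun β => (F c β)^2 - 1) (2 * F c betac ^ 1 * F1 betac) betac :=
    ((hasDerivAt_F c h1).pow 2).sub_const 1
  have hden := (Real.hasDerivAt_sqrt (ne_of_gt hA)).comp betac hinner
  have hsne : Real.sqrt ((F c betac)^2 - 1) ≠ 0 := by positivity
  have H := hasDerivAt_F1.div hden hsne
  convert H using 1
  · rfl
  · rfl
  · rfl
  have hB : (0:ℝ) < 3 - 4*c + c^2 := by nlinarith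
  have hAB : (F c betac)^2 - 1 = 3 - 4*c + c^2 := by rw [hFb]; ring
  simp only [Function.comp_apply]
  rw [F1_betac, hAB, Real.sq_sqrt hB.le]
  rw [zero_mul, sub_zero]
  rw [div_eq_div_iff (Real.sqrt_pos.mpr hB).ne' hB.ne']
  rw [mul_assoc, Real.mul_self_sqrt hB.le]

end Stmt12Aux

open Stmt12Aux in
theorem stmt12 (θ : ℝ) (hθ : θ ∈ Set.Ioc 0 Real.pi) (γ : ℝ → ℝ)
    (hγ : ∀ β > (0 : ℝ),
      0 ≤ γ β ∧ Real.cosh (γ β) = coth (2 * β) * Real.cosh (2 * β) - Real.cos θ) :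
    DifferentiableAt ℝ γ betac ∧
    DifferentiableAt ℝ (deriv γ) betac ∧
    deriv γ betac = 0 ∧
    deriv (deriv γ) betac = 16 / Real.sqrt (3 - 4 * Real.cos θ + (Real.cos θ) ^ 2) := by
  set c := Real.cos θ with hcdef
  have hc : c < 1 := by
    have := Real.cos_lt_cos_of_nonneg_of_le_pi (le_refl 0) hθ.2 hθ.1
    simpa using this
  -- the open set where everything is nice
  set W : Set ℝ := {β | 0 < Real.sinh (2*β)} ∩ (F c)⁻¹' (Set.Ioi 1) with hWdef
  have hsinhcont : Continuous (fun β : ℝ => Real.sinh (2*β)) :=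
    Real.continuous_sinh.comp (continuous_const.mul continuous_id)
  have hopen1 : IsOpen {β : ℝ | 0 < Real.sinh (2*β)} :=
    isOpen_lt continuous_const hsinhcont
  have hFcont : ContinuousOn (F c) {β : ℝ | 0 < Real.sinh (2*β)} := by
    apply ContinuousOn.sub _ continuousOn_const
    exact ((Real.continuous_cosh.comp (continuous_const.mul continuous_id)).pow 2).continuousOn.div
      hsinhcont.continuousOn (fun x hx => ne_of_gt hx)
  have hWopen : IsOpen W := hFcont.isOpen_inter_preimage hopen1 isOpen_Ioi
  have hWmem : betac ∈ W := by
    constructor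
    · show 0 < Real.sinh (2*betac); rw [sinh_two_betac]; norm_num
    · show F c betac ∈ Set.Ioi 1
      rw [Set.mem_Ioi, F_betac]; linarith
  -- γ = G c on W
  have hγG : ∀ β ∈ W, γ β = G c β := by
    intro β hβ
    obtain ⟨hβ1, hβ2⟩ := hβ
    have hβpos : 0 < β := by
      have := Real.sinh_pos_iff.mp hβ1
      linarith
    obtain ⟨hγ0, hγcosh⟩ := hγ β hβpos
    have hcoshF : Real.cosh (γ β) = F c β := by
      rw [hγcosh]
      unfold coth F
      have : Real.sinh (2*β) ≠ 0 := ne_of_gt hβ1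
      field_simp
    have hsinh_sq : Real.sinh (γ β)^2 = (F c β)^2 - 1 := by
      have h := Real.cosh_sq (γ β)
      rw [hcoshF] at h
      linarith
    have hsinh : Real.sqrt ((F c β)^2 - 1) = Real.sinh (γ β) := by
      rw [← hsinh_sq, Real.sqrt_sq (Real.sinh_nonneg_iff.mpr hγ0)]
    unfold G
    rw [hsinh, Real.arsinh_sinh]
  have hWnhds : W ∈ nhds betac := hWopen.mem_nhds hWmem
  -- γ has derivative G1 c β at each β ∈ W
  have hd1 : ∀ β ∈ W, HasDerivAt γ (G1 c β) β := by
    intro β hβ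
    have hG := hasDerivAt_G c (ne_of_gt hβ.1) hβ.2
    apply hG.congr_of_eventuallyEq
    exact Filter.eventually_of_mem (hWopen.mem_nhds hβ) hγG
  have hderiv_ev : deriv γ =ᶠ[nhds betac] G1 c :=
    Filter.eventually_of_mem hWnhds (fun β hβ => (hd1 β hβ).deriv)
  refine ⟨(hd1 betac hWmem).differentiableAt, ?_, ?_, ?_⟩
  · exact (hderiv_ev.differentiableAt_iff).mpr (hasDerivAt_G1 c hc).differentiableAt
  · rw [(hd1 betac hWmem).deriv]
    unfold G1
    rw [F1_betac, zero_div]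
  · rw [hderiv_ev.deriv_eq, (hasDerivAt_G1 c hc).deriv]
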